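/- Let $X=\mathbb{R}^+$ (positive reals) and $q(x,a,y)=x^{1-a}y^a$ for $a\in[0,1]$. Then $(X,q)$ is a mobi space over the canonical mobi algebra $([0,1],p,0,\tfrac12,1)$ with $p(a,b,c)=(1-b)a+bc$. -/
import Mathlib


structure MobiAlgebra (A : Type*) where
  p : A → A → A → A
  zero : A
  half : A
  one : A
  A1 : p one half zero = half
  A2 : ∀ a, p zero a one = a
  A3 : ∀ a b, p a b a = a
  A4 : ∀ a b, p a zero b = a
  A5 : ∀ a b, p a one b = b
  A6 : ∀ a b₁ b₂, p a half b₁ = p a half b₂ → b₁ = b₂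
  A7 : ∀ a b c₁ c₂ c₃, p a (p c₁ c₂ c₃) b = p (p a c₁ b) c₂ (p a c₃ b)
  A8 : ∀ a₁ a₂ b₁ b₂ c,
    p (p a₁ c b₁) half (p a₂ c b₂) = p (p a₁ half a₂) c (p b₁ half b₂)

structure MobiSpace {A : Type*} (M : MobiAlgebra A) (X : Type*) where
  q : X → A → X → X
  X1 : ∀ x y, q x M.zero y = x
  X2 : ∀ x y, q x M.one y = y
  X3 : ∀ x a, q x a x = x
  X4 : ∀ x y₁ y₂, q x M.half y₁ = q x M.half y₂ → y₁ = y₂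
  X5 : ∀ x y a b c, q (q x a y) b (q x c y) = q x (M.p a b c) y


noncomputable section GM
open Real

lemma pmem (a b c : Set.Icc (0:ℝ) 1) : (1 - (b:ℝ)) * a + b * c ∈ Set.Icc (0:ℝ) 1 := by
  obtain ⟨a, ha0, ha1⟩ := a; obtain ⟨b, hb0, hb1⟩ := b; obtain ⟨c, hc0, hc1⟩ := c
  constructor
  · have := mul_nonneg (by linarith : (0:ℝ) ≤ 1 - b) ha0
    nlinarith
  · nlinarith [mul_nonneg (by linarith : (0:ℝ) ≤ 1-b) (by linarith : (0:ℝ) ≤ 1-a),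
      mul_nonneg hb0 (by linarith : (0:ℝ) ≤ 1-c)]

def Mgm : MobiAlgebra (Set.Icc (0:ℝ) 1) where
  p a b c := ⟨(1 - (b:ℝ)) * a + b * c, pmem a b c⟩
  zero := ⟨0, by norm_num⟩
  half := ⟨1/2, by norm_num⟩
  one := ⟨1, by norm_num⟩
  A1 := by ext; norm_num
  A2 := fun a => by ext; push_cast; ring
  A3 := fun a b => by ext; push_cast; ring
  A4 := fun a b => by ext; push_cast; ring
  A5 := fun a b => by ext; push_cast; ring
  A6 := fun a b₁ b₂ h => by
    apply Subtype.ext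
    have h2 := congrArg Subtype.val h
    simp only at h2; linarith
  A7 := fun a b c₁ c₂ c₃ => by ext; push_cast; ring
  A8 := fun a₁ a₂ b₁ b₂ c => by ext; push_cast; ring

def Sgm : MobiSpace Mgm {x : ℝ // 0 < x} where
  q x a y := ⟨(x:ℝ) ^ (1-(a:ℝ)) * (y:ℝ) ^ (a:ℝ), by
    have hx := x.2; have hy := y.2; positivity⟩
  X1 := fun x y => by ext; simp [Mgm]
  X2 := fun x y => by ext; simp [Mgm, Real.rpow_one, x.2.ne']
  X3 := fun x a => by
    ext; show (x:ℝ) ^ (1-(a:ℝ)) * (x:ℝ) ^ (a:ℝ) = x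
    rw [← Real.rpow_add x.2]; simp
  X4 := fun x y₁ y₂ h => by
    have hx := x.2; have hy1 := y₁.2; have hy2 := y₂.2
    apply Subtype.ext
    have h' := congrArg Subtype.val h
    simp only [Mgm] at h'
    have hx2 : (0:ℝ) < (x:ℝ) ^ (1-(1/2:ℝ)) := by positivity
    have key : (y₁:ℝ) ^ ((1:ℝ)/2) = (y₂:ℝ) ^ ((1:ℝ)/2) :=
      mul_left_cancel₀ hx2.ne' h'
    have h2 := congrArg (· ^ (2:ℝ)) key
    simp only [← Real.rpow_natCast, ← Real.rpow_mul hy1.le, ← Real.rpow_mul hy2.le] at h2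
    norm_num at h2
    exact h2
  X5 := fun x y a b c => by
    have hx := x.2; have hy := y.2
    ext
    show ((x:ℝ) ^ (1-(a:ℝ)) * (y:ℝ) ^ (a:ℝ)) ^ (1-(b:ℝ)) *
      ((x:ℝ) ^ (1-(c:ℝ)) * (y:ℝ) ^ (c:ℝ)) ^ (b:ℝ) = _
    rw [mul_rpow (by positivity) (by positivity), mul_rpow (by positivity) (by positivity),
      ← Real.rpow_mul hx.le, ← Real.rpow_mul hy.le, ← Real.rpow_mul hx.le,
      ← Real.rpow_mul hy.le]
    rw [show (x:ℝ)^((1-(a:ℝ))*(1-(b:ℝ))) * (y:ℝ)^((a:ℝ)*(1-(b:ℝ))) *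
      ((x:ℝ)^((1-(c:ℝ))*(b:ℝ)) * (y:ℝ)^((c:ℝ)*(b:ℝ)))
      = (x:ℝ)^((1-(a:ℝ))*(1-(b:ℝ)) + (1-(c:ℝ))*(b:ℝ)) *
        (y:ℝ)^((a:ℝ)*(1-(b:ℝ)) + (c:ℝ)*(b:ℝ)) from by
        rw [Real.rpow_add hx, Real.rpow_add hy]; ring]
    show _ = (x:ℝ) ^ (1 - ((1-(b:ℝ))*(a:ℝ) + (b:ℝ)*(c:ℝ))) * (y:ℝ) ^ ((1-(b:ℝ))*(a:ℝ) + (b:ℝ)*(c:ℝ))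
    ring_nf

end GM

theorem geometric_mean_mobi :
    ∃ M : MobiAlgebra (Set.Icc (0:ℝ) 1),
      ((M.zero : ℝ) = 0 ∧ (M.half : ℝ) = 1/2 ∧ (M.one : ℝ) = 1 ∧
        ∀ a b c, (M.p a b c : ℝ) = (1 - (b:ℝ)) * a + b * c) ∧
      ∃ S : MobiSpace M {x : ℝ // 0 < x},
        ∀ (x y : {x : ℝ // 0 < x}) (a : Set.Icc (0:ℝ) 1),
          (S.q x a y : ℝ) = (x : ℝ) ^ (1 - (a:ℝ)) * (y : ℝ) ^ (a:ℝ) := by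
  refine ⟨Mgm, ⟨rfl, rfl, rfl, fun a b c => rfl⟩, Sgm, fun x y a => rfl⟩
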